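/- Let J be a model structure on ℂⁿ with associated functions L̃_{2n−1,k}. Then J is integrable (its Nijenhuis tensor vanishes) if and only if the compatibility conditions ∂L̃_{2n−1,k}/∂z̄^j = ∂L̃_{2n−1,j}/∂z̄^k hold for all 1 ≤ j,k ≤ n−1. -/

import Mathlib

open Complex BigOperators

/-- The entry `L̃_{2n-1,k}(z,z̄) = Σ_{l ≠ k} (α_l^k z^l + β_l^k conj(z^l))`. -/
noncomputable def Ltilde (n : ℕ) (α β : Fin n → Fin n → ℂ) (k : Fin n) (z : Fin n → ℂ) : ℂ :=
  ∑ l : Fin n, if l = k ∨ (l : ℕ) + 1 = n then 0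
    else (α l k * z l + β l k * (starRingEnd ℂ) (z l))

/-- The model almost complex structure on `ℂⁿ ≅ ℝ^{2n}`, written in complex
coordinates as a field of ℝ-linear endomorphisms of `ℂⁿ`:
`(Jv)_k = i v_k` for `k < n`, and `(Jv)_n = i v_n + Σ_{j<n} L̃_{2n-1,j}(z) conj(v_j)`. -/
noncomputable def modelJ (n : ℕ) (α β : Fin n → Fin n → ℂ)
    (z : Fin n → ℂ) (v : Fin n → ℂ) : Fin n → ℂ := fun k =>
  if (k : ℕ) + 1 = n then
    Complex.I * v k +
      ∑ j : Fin n, (if (j : ℕ) + 1 = n then 0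
        else Ltilde n α β j z * (starRingEnd ℂ) (v j))
  else Complex.I * v k

/-- Lie bracket of two vector fields on `ℂⁿ` (viewed as a real vector space). -/
noncomputable def brkt {n : ℕ} (X Y : (Fin n → ℂ) → (Fin n → ℂ)) (p : Fin n → ℂ) :
    Fin n → ℂ :=
  fderiv ℝ Y p (X p) - fderiv ℝ X p (Y p)

/-- The Nijenhuis tensor `N(u,v) = [Ju,Jv] - J[Ju,v] - J[u,Jv] - [u,v]` of an almost
complex structure `J` on `ℂⁿ`, evaluated on constant vector fields `u, v` at `p`
(the Nijenhuis tensor is tensorial, so constant fields suffice). -/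
noncomputable def nijenhuis {n : ℕ} (J : (Fin n → ℂ) → (Fin n → ℂ) → (Fin n → ℂ))
    (u v : Fin n → ℂ) (p : Fin n → ℂ) : Fin n → ℂ :=
  brkt (fun q => J q u) (fun q => J q v) p
    - J p (brkt (fun q => J q u) (fun _ => v) p)
    - J p (brkt (fun _ => u) (fun q => J q v) p)
    - brkt (fun _ => u) (fun _ => v) p

/-- The Wirtinger derivative `∂f/∂z̄^j = ½(∂f/∂x^j + i ∂f/∂y^j)` of `f : ℂⁿ → ℂ`. -/
noncomputable def dbar (n : ℕ) (f : (Fin n → ℂ) → ℂ) (j : Fin n) (z : Fin n → ℂ) : ℂ :=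
  (1 / 2 : ℂ) * (fderiv ℝ f z (Pi.single j 1) +
    Complex.I * fderiv ℝ f z (Pi.single j Complex.I))

/-- a model structure `J` on `ℂⁿ` is integrable (its Nijenhuis tensor
vanishes identically) iff the compatibility conditions
`∂L̃_{2n-1,k}/∂z̄^j = ∂L̃_{2n-1,j}/∂z̄^k` hold for all `1 ≤ j,k ≤ n-1`. -/
noncomputable def Lmap (n : ℕ) (α β : Fin n → Fin n → ℂ) (k : Fin n) :
    (Fin n → ℂ) →ₗ[ℝ] ℂ where
  toFun z := ∑ l : Fin n, if l = k ∨ (l : ℕ) + 1 = n then 0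
    else (α l k * z l + β l k * (starRingEnd ℂ) (z l))
  map_add' x y := by
    rw [← Finset.sum_add_distrib]
    refine Finset.sum_congr rfl fun l _ => ?_
    split_ifs with h
    · simp
    · simp only [Pi.add_apply, map_add]; ring
  map_smul' r x := by
    simp only [RingHom.id_apply, Finset.smul_sum]
    refine Finset.sum_congr rfl fun l _ => ?_
    split_ifs with h
    · simp
    · simp only [Pi.smul_apply, Complex.real_smul, map_mul, Complex.conj_ofReal, smul_eq_mul]
      ring

lemma Ltilde_eq (n : ℕ) (α β : Fin n → Fin n → ℂ) (k : Fin n) :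
    Ltilde n α β k = ⇑(Lmap n α β k) := rfl

lemma Ltilde_add (n : ℕ) (α β : Fin n → Fin n → ℂ) (k : Fin n) (x y : Fin n → ℂ) :
    Ltilde n α β k (x + y) = Ltilde n α β k x + Ltilde n α β k y := by
  rw [Ltilde_eq]; exact map_add _ x y

lemma Ltilde_smul (n : ℕ) (α β : Fin n → Fin n → ℂ) (k : Fin n) (r : ℝ) (x : Fin n → ℂ) :
    Ltilde n α β k (r • x) = r • Ltilde n α β k x := by
  rw [Ltilde_eq]; exact map_smul _ r x

noncomputable def Bmap (n : ℕ) (α β : Fin n → Fin n → ℂ) (v : Fin n → ℂ) :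
    (Fin n → ℂ) →ₗ[ℝ] (Fin n → ℂ) where
  toFun q := fun k => if (k : ℕ) + 1 = n then
      ∑ j : Fin n, (if (j : ℕ) + 1 = n then 0
        else Ltilde n α β j q * (starRingEnd ℂ) (v j))
    else 0
  map_add' x y := by
    funext k
    simp only [Pi.add_apply]
    split_ifs with h
    · rw [← Finset.sum_add_distrib]
      refine Finset.sum_congr rfl fun j _ => ?_
      split_ifs with h2
      · simp
      · rw [Ltilde_add, add_mul]
    · simp
  map_smul' r x := by
    funext k
    simp only [Pi.smul_apply, RingHom.id_apply]
    split_ifs with h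
    · rw [Finset.smul_sum]
      refine Finset.sum_congr rfl fun j _ => ?_
      split_ifs with h2
      · simp
      · rw [Ltilde_smul, smul_mul_assoc]
    · simp

lemma Bmap_apply (n : ℕ) (α β : Fin n → Fin n → ℂ) (v q : Fin n → ℂ) (k : Fin n) :
    Bmap n α β v q k = if (k : ℕ) + 1 = n then
      ∑ j : Fin n, (if (j : ℕ) + 1 = n then 0
        else Ltilde n α β j q * (starRingEnd ℂ) (v j))
    else 0 := rfl

lemma Bmap_out (n : ℕ) (α β : Fin n → Fin n → ℂ) (v q : Fin n → ℂ) (k : Fin n)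
    (hk : (k : ℕ) + 1 ≠ n) : Bmap n α β v q k = 0 := by
  rw [Bmap_apply, if_neg hk]

lemma Ltilde_vanish (n : ℕ) (α β : Fin n → Fin n → ℂ) (k : Fin n) (q : Fin n → ℂ)
    (hq : ∀ l : Fin n, (l : ℕ) + 1 ≠ n → q l = 0) : Ltilde n α β k q = 0 := by
  refine Finset.sum_eq_zero fun l _ => ?_
  by_cases h : l = k ∨ (l : ℕ) + 1 = n
  · rw [if_pos h]
  · push_neg at h
    rw [if_neg (by tauto), hq l h.2]
    simp

lemma Bmap_left_supp (n : ℕ) (α β : Fin n → Fin n → ℂ) (v q : Fin n → ℂ)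
    (hq : ∀ l : Fin n, (l : ℕ) + 1 ≠ n → q l = 0) : Bmap n α β v q = 0 := by
  funext k
  rw [Bmap_apply]
  split_ifs with h
  · refine Finset.sum_eq_zero fun j _ => ?_
    split_ifs with h2
    · rfl
    · rw [Ltilde_vanish n α β j q hq, zero_mul]
  · rfl

lemma Bmap_right_supp (n : ℕ) (α β : Fin n → Fin n → ℂ) (v q : Fin n → ℂ)
    (hv : ∀ l : Fin n, (l : ℕ) + 1 ≠ n → v l = 0) : Bmap n α β v q = 0 := by
  funext k
  rw [Bmap_apply]
  split_ifs with h
  · refine Finset.sum_eq_zero fun j _ => ?_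
    split_ifs with h2
    · rfl
    · rw [hv j h2]
      simp
  · rfl

lemma modelJ_eq (n : ℕ) (α β : Fin n → Fin n → ℂ) (v z : Fin n → ℂ) :
    modelJ n α β z v = (fun k => Complex.I * v k) + Bmap n α β v z := by
  funext k
  simp only [modelJ, Pi.add_apply, Bmap_apply]
  split_ifs with h
  · rfl
  · rw [add_zero]

lemma fderiv_modelJ (n : ℕ) (α β : Fin n → Fin n → ℂ) (u p : Fin n → ℂ) :
    fderiv ℝ (fun q => modelJ n α β q u) p
      = LinearMap.toContinuousLinearMap (Bmap n α β u) := by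
  have h : (fun q => modelJ n α β q u)
      = fun q => (fun k => Complex.I * u k)
          + LinearMap.toContinuousLinearMap (Bmap n α β u) q := by
    funext q
    rw [modelJ_eq, LinearMap.coe_toContinuousLinearMap']
  rw [h, fderiv_const_add, ContinuousLinearMap.fderiv]

noncomputable def Fbeta (n : ℕ) (β : Fin n → Fin n → ℂ) (j : Fin n) (u : Fin n → ℂ) : ℂ :=
  ∑ l : Fin n, if l = j ∨ (l : ℕ) + 1 = n then 0 else β l j * (starRingEnd ℂ) (u l)

lemma key_scalar (n : ℕ) (α β : Fin n → Fin n → ℂ) (j : Fin n) (u : Fin n → ℂ) :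
    Ltilde n α β j (fun l => Complex.I * u l)
      = Complex.I * Ltilde n α β j u - 2 * Complex.I * Fbeta n β j u := by
  unfold Ltilde Fbeta
  rw [Finset.mul_sum, Finset.mul_sum, ← Finset.sum_sub_distrib]
  refine Finset.sum_congr rfl fun l _ => ?_
  split_ifs with h
  · simp
  · simp only [map_mul, Complex.conj_I]
    ring

lemma nij_formula (n : ℕ) (α β : Fin n → Fin n → ℂ) (u v p : Fin n → ℂ) :
    nijenhuis (modelJ n α β) u v p = fun k =>
      Bmap n α β v (fun l => Complex.I * u l) k - Bmap n α β u (fun l => Complex.I * v l) k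
        + Complex.I * Bmap n α β u v k - Complex.I * Bmap n α β v u k := by
  have h1 : brkt (fun q => modelJ n α β q u) (fun q => modelJ n α β q v) p
      = Bmap n α β v (fun l => Complex.I * u l) - Bmap n α β u (fun l => Complex.I * v l) := by
    unfold brkt
    rw [fderiv_modelJ, fderiv_modelJ]
    have e1 : (fun q => modelJ n α β q u) p = (fun l => Complex.I * u l) + Bmap n α β u p :=
      modelJ_eq n α β u p
    have e2 : (fun q => modelJ n α β q v) p = (fun l => Complex.I * v l) + Bmap n α β v p :=
      modelJ_eq n α β v p
    rw [e1, e2]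
    simp only [LinearMap.coe_toContinuousLinearMap', map_add]
    rw [Bmap_left_supp n α β v (Bmap n α β u p) (fun l hl => Bmap_out n α β u p l hl),
      Bmap_left_supp n α β u (Bmap n α β v p) (fun l hl => Bmap_out n α β v p l hl),
      add_zero, add_zero]
  have h2 : brkt (fun q => modelJ n α β q u) (fun _ => v) p = -(Bmap n α β u v) := by
    unfold brkt
    rw [fderiv_modelJ, fderiv_fun_const]
    simp [LinearMap.coe_toContinuousLinearMap']
  have h3 : brkt (fun _ => u) (fun q => modelJ n α β q v) p = Bmap n α β v u := by
    unfold brkt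
    rw [fderiv_modelJ, fderiv_fun_const]
    simp [LinearMap.coe_toContinuousLinearMap']
  have h4 : brkt (fun _ : Fin n → ℂ => u) (fun _ => v) p = 0 := by
    unfold brkt
    rw [fderiv_fun_const, fderiv_fun_const]
    simp
  unfold nijenhuis
  rw [h1, h2, h3, h4]
  have e5 : modelJ n α β p (-(Bmap n α β u v))
      = fun k => Complex.I * (-(Bmap n α β u v)) k := by
    rw [modelJ_eq, Bmap_right_supp n α β _ p
      (fun l hl => by rw [Pi.neg_apply, Bmap_out n α β u v l hl, neg_zero]), add_zero]
  have e6 : modelJ n α β p (Bmap n α β v u)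
      = fun k => Complex.I * (Bmap n α β v u) k := by
    rw [modelJ_eq, Bmap_right_supp n α β _ p
      (fun l hl => by rw [Bmap_out n α β v u l hl]), add_zero]
  rw [e5, e6]
  funext k
  simp only [Pi.sub_apply, Pi.neg_apply, sub_zero, Pi.zero_apply]
  ring

lemma nij_last (n : ℕ) (α β : Fin n → Fin n → ℂ) (u v p : Fin n → ℂ) (k : Fin n)
    (hk : (k : ℕ) + 1 = n) :
    nijenhuis (modelJ n α β) u v p k =
      (-2 * Complex.I) * ∑ j : Fin n, (if (j : ℕ) + 1 = n then 0
          else Fbeta n β j u * (starRingEnd ℂ) (v j))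
        + (2 * Complex.I) * ∑ j : Fin n, (if (j : ℕ) + 1 = n then 0
          else Fbeta n β j v * (starRingEnd ℂ) (u j)) := by
  rw [nij_formula]
  simp only [Bmap_apply, if_pos hk]
  have hA : ∑ j : Fin n, (if (j : ℕ) + 1 = n then 0
        else Ltilde n α β j (fun l => Complex.I * u l) * (starRingEnd ℂ) (v j))
      - Complex.I * ∑ j : Fin n, (if (j : ℕ) + 1 = n then 0
        else Ltilde n α β j u * (starRingEnd ℂ) (v j))
      = (-2 * Complex.I) * ∑ j : Fin n, (if (j : ℕ) + 1 = n then 0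
        else Fbeta n β j u * (starRingEnd ℂ) (v j)) := by
    rw [Finset.mul_sum, Finset.mul_sum, ← Finset.sum_sub_distrib]
    refine Finset.sum_congr rfl fun j _ => ?_
    split_ifs with h
    · simp
    · rw [key_scalar]
      ring
  have hB : ∑ j : Fin n, (if (j : ℕ) + 1 = n then 0
        else Ltilde n α β j (fun l => Complex.I * v l) * (starRingEnd ℂ) (u j))
      - Complex.I * ∑ j : Fin n, (if (j : ℕ) + 1 = n then 0
        else Ltilde n α β j v * (starRingEnd ℂ) (u j))
      = (-2 * Complex.I) * ∑ j : Fin n, (if (j : ℕ) + 1 = n then 0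
        else Fbeta n β j v * (starRingEnd ℂ) (u j)) := by
    rw [Finset.mul_sum, Finset.mul_sum, ← Finset.sum_sub_distrib]
    refine Finset.sum_congr rfl fun j _ => ?_
    split_ifs with h
    · simp
    · rw [key_scalar]
      ring
  linear_combination hA - hB

lemma Fbeta_single (n : ℕ) (β : Fin n → Fin n → ℂ) (j l : Fin n) :
    Fbeta n β j (Pi.single l (1 : ℂ)) = if l = j ∨ (l : ℕ) + 1 = n then 0 else β l j := by
  unfold Fbeta
  rw [Finset.sum_eq_single l]
  · rw [Pi.single_eq_same, map_one, mul_one]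
  · intro b _ hb
    rw [Pi.single_eq_of_ne hb, map_zero, mul_zero, ite_self]
  · intro h
    exact absurd (Finset.mem_univ l) h

lemma sum_single_pick (n : ℕ) (β : Fin n → Fin n → ℂ) (u : Fin n → ℂ) (j0 : Fin n) :
    ∑ j : Fin n, (if (j : ℕ) + 1 = n then 0
        else Fbeta n β j u * (starRingEnd ℂ) ((Pi.single j0 1 : Fin n → ℂ) j))
      = if (j0 : ℕ) + 1 = n then 0 else Fbeta n β j0 u := by
  rw [Finset.sum_eq_single j0]
  · rw [Pi.single_eq_same, map_one, mul_one]
  · intro b _ hb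
    rw [Pi.single_eq_of_ne hb, map_zero, mul_zero, ite_self]
  · intro h
    exact absurd (Finset.mem_univ j0) h

lemma sym_of_nij (n : ℕ) (hn : 1 ≤ n) (α β : Fin n → Fin n → ℂ)
    (hN : ∀ (u v p : Fin n → ℂ), nijenhuis (modelJ n α β) u v p = 0) :
    ∀ j l : Fin n, (j : ℕ) + 1 ≠ n → (l : ℕ) + 1 ≠ n → β l j = β j l := by
  intro j l hj hl
  by_cases hjl : l = j
  · rw [hjl]
  · have hkn : n - 1 < n := by omega
    set k : Fin n := ⟨n - 1, hkn⟩ with hkdef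
    have hk : (k : ℕ) + 1 = n := by simp only [hkdef]; omega
    have h0 := congrFun (hN (Pi.single l 1) (Pi.single j 1) 0) k
    rw [nij_last n α β _ _ _ k hk, sum_single_pick, sum_single_pick, if_neg hj, if_neg hl,
      Fbeta_single, Fbeta_single, if_neg (by tauto), Pi.zero_apply] at h0
    rw [if_neg (by rintro (h | h); exact hjl h.symm; exact hj h)] at h0
    have h2 : (2 * Complex.I) * (β j l - β l j) = 0 := by linear_combination h0
    have h3 : (2 : ℂ) * Complex.I ≠ 0 := by
      simp [Complex.I_ne_zero]
    exact (sub_eq_zero.mp ((mul_eq_zero.mp h2).resolve_left h3)).symm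

lemma nij_of_sym (n : ℕ) (α β : Fin n → Fin n → ℂ)
    (hs : ∀ j l : Fin n, (j : ℕ) + 1 ≠ n → (l : ℕ) + 1 ≠ n → β l j = β j l) :
    ∀ (u v p : Fin n → ℂ), nijenhuis (modelJ n α β) u v p = 0 := by
  intro u v p
  funext k
  by_cases hk : (k : ℕ) + 1 = n
  · rw [nij_last n α β u v p k hk]
    set G : Fin n → Fin n → ℂ := fun j l =>
      if (j : ℕ) + 1 = n ∨ l = j ∨ (l : ℕ) + 1 = n then 0
      else β l j * (starRingEnd ℂ) (u l) * (starRingEnd ℂ) (v j) with hG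
    have hGdef : ∀ j l : Fin n, G j l =
        if (j : ℕ) + 1 = n ∨ l = j ∨ (l : ℕ) + 1 = n then 0
        else β l j * (starRingEnd ℂ) (u l) * (starRingEnd ℂ) (v j) := fun _ _ => rfl
    have hS1 : ∑ j : Fin n, (if (j : ℕ) + 1 = n then 0
          else Fbeta n β j u * (starRingEnd ℂ) (v j)) = ∑ j : Fin n, ∑ l : Fin n, G j l := by
      refine Finset.sum_congr rfl fun j _ => ?_
      by_cases h : (j : ℕ) + 1 = n
      · rw [if_pos h]
        exact (Finset.sum_eq_zero fun l _ => by rw [hGdef]; exact if_pos (Or.inl h)).symm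
      · rw [if_neg h]
        unfold Fbeta
        rw [Finset.sum_mul]
        refine Finset.sum_congr rfl fun l _ => ?_
        by_cases h2 : l = j ∨ (l : ℕ) + 1 = n
        · rw [if_pos h2, hGdef, if_pos (Or.inr h2), zero_mul]
        · rw [if_neg h2, hGdef, if_neg (by tauto)]
    have hS2 : ∑ j : Fin n, (if (j : ℕ) + 1 = n then 0
          else Fbeta n β j v * (starRingEnd ℂ) (u j)) = ∑ j : Fin n, ∑ l : Fin n, G l j := by
      refine Finset.sum_congr rfl fun j _ => ?_
      by_cases h : (j : ℕ) + 1 = n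
      · rw [if_pos h]
        refine (Finset.sum_eq_zero fun l _ => ?_).symm
        rw [hGdef]
        exact if_pos (Or.inr (Or.inr h))
      · rw [if_neg h]
        unfold Fbeta
        rw [Finset.sum_mul]
        refine Finset.sum_congr rfl fun l _ => ?_
        by_cases h2 : l = j ∨ (l : ℕ) + 1 = n
        · rw [if_pos h2, hGdef]
          rw [if_pos (h2.elim (fun e => Or.inr (Or.inl e.symm)) fun e => Or.inl e), zero_mul]
        · push_neg at h2
          rw [if_neg (not_or.mpr h2), hGdef,
            if_neg (by rintro (a | a | a); exact h2.2 a; exact h2.1 a.symm; exact h a)]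
          rw [hs j l h h2.2]
          ring
    rw [hS1, hS2, Finset.sum_comm, Pi.zero_apply]
    ring
  · rw [nij_formula]
    rw [Pi.zero_apply]
    show Bmap n α β v _ k - Bmap n α β u _ k + Complex.I * Bmap n α β u v k
        - Complex.I * Bmap n α β v u k = 0
    rw [Bmap_out n α β v _ k hk, Bmap_out n α β u _ k hk, Bmap_out n α β u v k hk,
      Bmap_out n α β v u k hk]
    ring

lemma Lmap_single (n : ℕ) (α β : Fin n → Fin n → ℂ) (k j : Fin n) (c : ℂ) :
    Lmap n α β k (Pi.single j c) = if j = k ∨ (j : ℕ) + 1 = n then 0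
      else (α j k * c + β j k * (starRingEnd ℂ) c) := by
  rw [← Ltilde_eq]
  unfold Ltilde
  rw [Finset.sum_eq_single j]
  · rw [Pi.single_eq_same]
  · intro b _ hb
    rw [Pi.single_eq_of_ne hb, map_zero, mul_zero, mul_zero, add_zero, ite_self]
  · intro h
    exact absurd (Finset.mem_univ j) h

lemma dbar_Ltilde (n : ℕ) (α β : Fin n → Fin n → ℂ) (k j : Fin n) (z : Fin n → ℂ) :
    dbar n (Ltilde n α β k) j z = if j = k ∨ (j : ℕ) + 1 = n then 0 else β j k := by
  unfold dbar
  have hf : Ltilde n α β k = ⇑(LinearMap.toContinuousLinearMap (Lmap n α β k)) := by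
    rw [Ltilde_eq, LinearMap.coe_toContinuousLinearMap']
  rw [hf, ContinuousLinearMap.fderiv, LinearMap.coe_toContinuousLinearMap',
    Lmap_single, Lmap_single]
  split_ifs with h
  · simp
  · have hI : Complex.I * Complex.I = -1 := Complex.I_mul_I
    rw [map_one, Complex.conj_I]
    linear_combination (1 / 2 * α j k - 1 / 2 * β j k) * hI

theorem stmt4 (n : ℕ) (hn : 1 ≤ n) (α β : Fin n → Fin n → ℂ) :
    (∀ (u v p : Fin n → ℂ), nijenhuis (modelJ n α β) u v p = 0) ↔
      (∀ (j k : Fin n) (z : Fin n → ℂ), (j : ℕ) + 1 < n → (k : ℕ) + 1 < n →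
        dbar n (Ltilde n α β k) j z = dbar n (Ltilde n α β j) k z) := by
  constructor
  · intro hN j k z hj hk
    rw [dbar_Ltilde, dbar_Ltilde]
    by_cases hjk : j = k
    · rw [if_pos (Or.inl hjk), if_pos (Or.inl hjk.symm)]
    · rw [if_neg (by rintro (a | a); exact hjk a; omega),
        if_neg (by rintro (a | a); exact hjk a.symm; omega)]
      exact sym_of_nij n hn α β hN k j (by omega) (by omega)
  · intro h
    apply nij_of_sym
    intro j l hj hl
    by_cases hjl : l = j
    · rw [hjl]
    · have hj' : (j : ℕ) + 1 < n := by have := j.isLt; omega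
      have hl' : (l : ℕ) + 1 < n := by have := l.isLt; omega
      have h0 := h l j 0 hl' hj'
      rw [dbar_Ltilde, dbar_Ltilde,
        if_neg (by rintro (a | a); exact hjl a; exact hl a),
        if_neg (by rintro (a | a); exact hjl a.symm; exact hj a)] at h0
      exact h0
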